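/- arXiv:2309.15399 — 8 statements merged into one kernel-verified Lean document; each statement's English description precedes it below -/
import Mathlib

section
/- Let ν be an additive measure on N and η a real number with 0 < η < min_{i∈N} ν({i}) (assuming all ν({i}) > 0). Define μ(∅)=0, μ(N)=1, and μ(A)=ν(A)−η for all nonempty proper subsets A ⊂ N. Then μ is a supermodular fuzzy measure, and μ(A) ≤ ν(A) for all A ⊆ N. -/
/-- Strategy (S1): subtracting η ∈ (0, min ν({i})) from every nonempty proper
subset's value of an additive measure ν yields a supermodular fuzzy measure μ
with μ(A) ≤ ν(A) for all A. -/
theorem additive_shift_is_supermodular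
    {ι : Type*} [Fintype ι] [DecidableEq ι]
    (hcard : 2 ≤ Fintype.card ι)
    (ν μ : Finset ι → ℝ) (η : ℝ)
    (hν0 : ν ∅ = 0) (hν1 : ν Finset.univ = 1)
    (hνrange : ∀ A : Finset ι, 0 ≤ ν A ∧ ν A ≤ 1)
    (hνadd : ∀ A B : Finset ι, Disjoint A B → ν (A ∪ B) = ν A + ν B)
    (hpos : ∀ i : ι, 0 < ν {i})
    (hη0 : 0 < η) (hη1 : ∀ i : ι, η < ν {i})
    (hμ0 : μ ∅ = 0) (hμ1 : μ Finset.univ = 1)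
    (hμ : ∀ A : Finset ι, A ≠ ∅ → A ≠ Finset.univ → μ A = ν A - η) :
    (∀ A B : Finset ι, A ⊆ B → μ A ≤ μ B) ∧
    (∀ A : Finset ι, 0 ≤ μ A ∧ μ A ≤ 1) ∧
    (∀ A B : Finset ι, μ (A ∪ B) + μ (A ∩ B) ≥ μ A + μ B) ∧
    (∀ A : Finset ι, μ A ≤ ν A) := by
  -- monotonicity of ν
  have hνmono : ∀ A B : Finset ι, A ⊆ B → ν A ≤ ν B := by
    intro A B hAB
    have hd : Disjoint A (B \ A) := Finset.disjoint_sdiff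
    have hu : A ∪ (B \ A) = B := Finset.union_sdiff_of_subset hAB
    have := hνadd A (B \ A) hd
    rw [hu] at this
    linarith [(hνrange (B \ A)).1]
  -- η < ν A for nonempty A
  have hηA : ∀ A : Finset ι, A ≠ ∅ → η < ν A := by
    intro A hA
    obtain ⟨i, hi⟩ := Finset.nonempty_iff_ne_empty.2 hA
    have h1 : ν {i} ≤ ν A := hνmono _ _ (Finset.singleton_subset_iff.2 hi)
    linarith [hη1 i]
  -- modularity of ν
  have hmod : ∀ A B : Finset ι, ν (A ∪ B) + ν (A ∩ B) = ν A + ν B := by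
    intro A B
    have h1 : ν (A ∪ B) = ν A + ν (B \ A) := by
      have := hνadd A (B \ A) Finset.disjoint_sdiff
      rwa [Finset.union_sdiff_self_eq_union] at this
    have h2 : ν B = ν (A ∩ B) + ν (B \ A) := by
      have hd : Disjoint (A ∩ B) (B \ A) := by
        refine Finset.disjoint_left.2 ?_
        intro x hx hx'
        exact (Finset.mem_sdiff.1 hx').2 (Finset.mem_inter.1 hx).1
      have hu : (A ∩ B) ∪ (B \ A) = B := by
        ext x
        simp only [Finset.mem_union, Finset.mem_inter, Finset.mem_sdiff]
        tauto
      have := hνadd (A ∩ B) (B \ A) hd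
      rw [hu] at this
      linarith
    linarith
  -- μ range
  have hrange : ∀ A : Finset ι, 0 ≤ μ A ∧ μ A ≤ 1 := by
    intro A
    by_cases hA : A = ∅
    · subst hA; rw [hμ0]; norm_num
    by_cases hU : A = Finset.univ
    · subst hU; rw [hμ1]; norm_num
    · rw [hμ A hA hU]
      constructor
      · linarith [hηA A hA]
      · linarith [(hνrange A).2]
  -- monotonicity
  have hmono : ∀ A B : Finset ι, A ⊆ B → μ A ≤ μ B := by
    intro A B hAB
    by_cases hA : A = ∅
    · subst hA; rw [hμ0]; exact (hrange B).1
    by_cases hB : B = Finset.univ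
    · subst hB; rw [hμ1]; exact (hrange A).2
    · have hBne : B ≠ ∅ := by
        intro h; subst h; exact hA (Finset.subset_empty.1 hAB)
      have hAU : A ≠ Finset.univ := by
        intro h; subst h
        exact hB (Finset.univ_subset_iff.1 hAB)
      rw [hμ A hA hAU, hμ B hBne hB]
      linarith [hνmono A B hAB]
  refine ⟨hmono, hrange, ?_, ?_⟩
  · -- supermodularity
    intro A B
    -- write μ S = ν S - c S
    have key : ∀ S : Finset ι,
        μ S = ν S - (if S = ∅ ∨ S = Finset.univ then 0 else η) := by
      intro S
      by_cases h1 : S = ∅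
      · simp [h1, hμ0, hν0]
      by_cases h2 : S = Finset.univ
      · simp [h1, h2, hμ1, hν1]
      · simp [h1, h2, hμ S h1 h2]
    rw [key A, key B, key (A ∪ B), key (A ∩ B)]
    have hm := hmod A B
    -- need: c(A∪B) + c(A∩B) ≤ c A + c B
    have hc : (if A ∪ B = ∅ ∨ A ∪ B = Finset.univ then (0:ℝ) else η)
        + (if A ∩ B = ∅ ∨ A ∩ B = Finset.univ then (0:ℝ) else η)
        ≤ (if A = ∅ ∨ A = Finset.univ then (0:ℝ) else η)
        + (if B = ∅ ∨ B = Finset.univ then (0:ℝ) else η) := by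
      by_cases hA : A = ∅
      · subst hA
        simp [Finset.empty_inter, le_refl]
      by_cases hB : B = ∅
      · subst hB
        simp [Finset.inter_empty, le_refl]
      by_cases hAU : A = Finset.univ
      · subst hAU
        simp [Finset.univ_inter, Finset.union_comm]
      by_cases hBU : B = Finset.univ
      · subst hBU
        simp [Finset.inter_univ]
      · simp only [hA, hB, hAU, hBU, or_self, if_false]
        have h1 : (if A ∪ B = ∅ ∨ A ∪ B = Finset.univ then (0:ℝ) else η) ≤ η := by
          split <;> linarith
        have h2 : (if A ∩ B = ∅ ∨ A ∩ B = Finset.univ then (0:ℝ) else η) ≤ η := by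
          split <;> linarith
        linarith
    linarith
  · -- μ ≤ ν
    intro A
    by_cases hA : A = ∅
    · subst hA; rw [hμ0, hν0]
    by_cases hU : A = Finset.univ
    · subst hU; rw [hμ1, hν1]
    · rw [hμ A hA hU]; linarith
end

section
/- Let N be a finite set with n = |N| ≥ 3, and let ν be an additive measure with ν({i}) > 0 for all i ∈ N. Choose reals 0 < η_1 < η_2 < ⋯ < η_{n−1} with η_1 + ⋯ + η_{n−1} < min_{i∈N} ν({i}). Define μ(∅)=0, μ(N)=1, μ({i}) = ν({i}) − Σ_{t=1}^{n−1} η_t for singletons, and μ(A) = ν(A) − Σ_{t=|A|}^{n−1} η_t for 1 < |A| ≤ n−1. Then μ is a strictly supermodular fuzzy measure, i.e., μ(A∪B) + μ(A∩B) > μ(A) + μ(B) for all A, B ⊆ N with A∩B ≠ A and A∩B ≠ B. -/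
/-- Strategy (S2): cascading subtraction of increasing amounts η_t from an additive
measure with strictly positive singleton values yields a strictly supermodular
fuzzy measure. -/
theorem additive_shift_is_strictly_supermodular
    {ι : Type*} [Fintype ι] [DecidableEq ι]
    (hn : 3 ≤ Fintype.card ι)
    (ν μ : Finset ι → ℝ) (η : ℕ → ℝ)
    (hν0 : ν ∅ = 0) (hν1 : ν Finset.univ = 1)
    (hνrange : ∀ A : Finset ι, 0 ≤ ν A ∧ ν A ≤ 1)
    (hνadd : ∀ A B : Finset ι, Disjoint A B → ν (A ∪ B) = ν A + ν B)
    (hpos : ∀ i : ι, 0 < ν {i})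
    (hη0 : 0 < η 1)
    (hηmono : ∀ t : ℕ, 1 ≤ t → t + 1 ≤ Fintype.card ι - 1 → η t < η (t + 1))
    (hηsum : ∀ i : ι, (∑ t ∈ Finset.Icc 1 (Fintype.card ι - 1), η t) < ν {i})
    (hμ0 : μ ∅ = 0) (hμ1 : μ Finset.univ = 1)
    (hμ : ∀ A : Finset ι, A ≠ ∅ → A ≠ Finset.univ →
      μ A = ν A - ∑ t ∈ Finset.Icc A.card (Fintype.card ι - 1), η t) :
    (∀ A B : Finset ι, A ⊆ B → μ A ≤ μ B) ∧
    (∀ A : Finset ι, 0 ≤ μ A ∧ μ A ≤ 1) ∧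
    (∀ A B : Finset ι, ¬ A ⊆ B → ¬ B ⊆ A →
      μ (A ∪ B) + μ (A ∩ B) > μ A + μ B) := by
  set n := Fintype.card ι with hn_def
  set S : ℕ → ℝ := fun k => ∑ t ∈ Finset.Ico k n, η t with hS_def
  -- strict monotonicity of η on [1, n-1]
  have hmono : ∀ s t : ℕ, 1 ≤ s → s < t → t ≤ n - 1 → η s < η t := by
    intro s t hs hst ht
    induction t with
    | zero => omega
    | succ t ih =>
      rcases eq_or_lt_of_le (Nat.lt_succ_iff.mp hst) with h | h
      · exact h ▸ hηmono s hs (by omega)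
      · exact lt_trans (ih h (by omega)) (hηmono t (by omega) (by omega))
  have hpos' : ∀ t : ℕ, 1 ≤ t → t ≤ n - 1 → 0 < η t := by
    intro t ht1 ht2
    rcases eq_or_lt_of_le ht1 with h | h
    · rwa [← h]
    · exact hη0.trans (hmono 1 t le_rfl h ht2)
  have hIcc : ∀ k : ℕ, Finset.Icc k (n - 1) = Finset.Ico k n := by
    intro k; rw [← Finset.Ico_add_one_right_eq_Icc]; congr 1; omega
  have hIco_nonneg : ∀ k m : ℕ, 1 ≤ k → m ≤ n → 0 ≤ ∑ t ∈ Finset.Ico k m, η t := by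
    intro k m hk hm
    refine Finset.sum_nonneg fun t ht => ?_
    rw [Finset.mem_Ico] at ht
    exact (hpos' t (le_trans hk ht.1) (by omega)).le
  have hsplit : ∀ k m : ℕ, k ≤ m → m ≤ n →
      S k = (∑ t ∈ Finset.Ico k m, η t) + S m := by
    intro k m h1 h2
    exact (Finset.sum_Ico_consecutive η h1 h2).symm
  have hSpos : ∀ k : ℕ, 1 ≤ k → k ≤ n - 1 → 0 < S k := by
    intro k h1 h2
    refine Finset.sum_pos (fun t ht => ?_) ?_
    · rw [Finset.mem_Ico] at ht
      exact hpos' t (le_trans h1 ht.1) (by omega)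
    · exact ⟨k, Finset.mem_Ico.mpr ⟨le_rfl, by omega⟩⟩
  -- uniform formula for μ on nonempty sets
  have hμ' : ∀ A : Finset ι, A ≠ ∅ → μ A = ν A - S A.card := by
    intro A hA
    by_cases hU : A = Finset.univ
    · subst hU
      have hcard : (Finset.univ : Finset ι).card = n := Finset.card_univ
      simp [hμ1, hν1, hS_def, hcard]
    · rw [hμ A hA hU, hIcc]
  have hνmono : ∀ A B : Finset ι, A ⊆ B → ν A ≤ ν B := by
    intro A B hAB
    have h := hνadd A (B \ A) Finset.disjoint_sdiff
    rw [Finset.union_sdiff_of_subset hAB] at h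
    have := (hνrange (B \ A)).1
    linarith
  have hcard_le : ∀ A : Finset ι, A.card ≤ n := fun A => by
    simpa using Finset.card_le_univ A
  -- range
  have hrange : ∀ A : Finset ι, 0 ≤ μ A ∧ μ A ≤ 1 := by
    intro A
    by_cases hA : A = ∅
    · subst hA; simp [hμ0]
    · obtain ⟨i, hi⟩ := Finset.nonempty_iff_ne_empty.mpr hA
      have hc1 : 1 ≤ A.card := Finset.card_pos.mpr ⟨i, hi⟩
      have hS1 : S 1 = (∑ t ∈ Finset.Ico 1 A.card, η t) + S A.card :=
        hsplit 1 A.card hc1 (hcard_le A)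
      have h1 : S 1 < ν {i} := by
        have := hηsum i; rwa [hIcc] at this
      have h2 : ν {i} ≤ ν A := hνmono _ _ (Finset.singleton_subset_iff.mpr hi)
      have h3 : 0 ≤ ∑ t ∈ Finset.Ico 1 A.card, η t :=
        hIco_nonneg 1 A.card le_rfl (hcard_le A)
      have h4 : 0 ≤ S A.card := by
        rcases eq_or_lt_of_le (hcard_le A) with h | h
        · simp [hS_def, h]
        · exact (hSpos A.card hc1 (by omega)).le
      rw [hμ' A hA]
      constructor
      · linarith
      · have := (hνrange A).2; linarith
  refine ⟨?_, hrange, ?_⟩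
  -- monotonicity
  · intro A B hAB
    by_cases hA : A = ∅
    · subst hA; rw [hμ0]; exact (hrange B).1
    · have hB : B ≠ ∅ := fun h => hA (Finset.subset_empty.mp (h ▸ hAB))
      have hc : A.card ≤ B.card := Finset.card_le_card hAB
      have hc1 : 1 ≤ A.card := Finset.card_pos.mpr (Finset.nonempty_iff_ne_empty.mpr hA)
      have hSAB : S A.card = (∑ t ∈ Finset.Ico A.card B.card, η t) + S B.card :=
        hsplit _ _ hc (hcard_le B)
      have h3 : 0 ≤ ∑ t ∈ Finset.Ico A.card B.card, η t :=
        hIco_nonneg _ _ hc1 (hcard_le B)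
      have h4 : ν A ≤ ν B := hνmono A B hAB
      rw [hμ' A hA, hμ' B hB]
      linarith
  -- strict supermodularity
  · intro A B hAB hBA
    have hA0 : A ≠ ∅ := fun h => hAB (h ▸ Finset.empty_subset B)
    have hB0 : B ≠ ∅ := fun h => hBA (h ▸ Finset.empty_subset A)
    have hU0 : A ∪ B ≠ ∅ := fun h => hA0 (Finset.subset_empty.mp (h ▸ Finset.subset_union_left))
    have hia : (A ∩ B).card < A.card :=
      Finset.card_lt_card ((Finset.inter_subset_left).ssubset_of_ne
        (fun h => hAB (Finset.inter_eq_left.mp h)))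
    have hib : (A ∩ B).card < B.card :=
      Finset.card_lt_card ((Finset.inter_subset_right).ssubset_of_ne
        (fun h => hBA (Finset.inter_eq_right.mp h)))
    have hau : A.card < (A ∪ B).card :=
      Finset.card_lt_card ((Finset.subset_union_left).ssubset_of_ne
        (fun h => hBA (Finset.union_eq_left.mp h.symm)))
    have hbu : B.card < (A ∪ B).card :=
      Finset.card_lt_card ((Finset.subset_union_right).ssubset_of_ne
        (fun h => hAB (Finset.union_eq_right.mp h.symm)))
    have hcards : (A ∪ B).card + (A ∩ B).card = A.card + B.card :=
      Finset.card_union_add_card_inter A B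
    have hun : (A ∪ B).card ≤ n := hcard_le _
    have hb1 : 1 ≤ B.card := Finset.card_pos.mpr (Finset.nonempty_iff_ne_empty.mpr hB0)
    have ha1 : 1 ≤ A.card := Finset.card_pos.mpr (Finset.nonempty_iff_ne_empty.mpr hA0)
    -- additive identity for ν
    have hνid : ν (A ∪ B) + ν (A ∩ B) = ν A + ν B := by
      have h1 := hνadd A (B \ A) Finset.disjoint_sdiff
      rw [Finset.union_sdiff_self_eq_union] at h1
      have h2 := hνadd (B ∩ A) (B \ A)
        (Finset.disjoint_sdiff.mono_left Finset.inter_subset_right)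
      have h3 : B ∩ A ∪ B \ A = B := by
        ext x; simp only [Finset.mem_union, Finset.mem_inter, Finset.mem_sdiff]; tauto
      rw [h3] at h2
      rw [Finset.inter_comm]
      linarith
    by_cases hI : A ∩ B = ∅
    · -- disjoint case
      have hi0 : (A ∩ B).card = 0 := by rw [hI]; rfl
      have hSA : S A.card = (∑ t ∈ Finset.Ico A.card (A ∪ B).card, η t) + S (A ∪ B).card :=
        hsplit _ _ hau.le hun
      have h3 : 0 ≤ ∑ t ∈ Finset.Ico A.card (A ∪ B).card, η t :=
        hIco_nonneg _ _ ha1 hun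
      have h4 : 0 < S B.card := hSpos _ hb1 (by omega)
      rw [hμ' A hA0, hμ' B hB0, hμ' (A ∪ B) hU0, hI, hμ0]
      have hIν : ν (A ∩ B) = 0 := by rw [hI, hν0]
      linarith
    · have hi1 : 1 ≤ (A ∩ B).card :=
        Finset.card_pos.mpr (Finset.nonempty_iff_ne_empty.mpr hI)
      have hSI : S (A ∩ B).card =
          (∑ t ∈ Finset.Ico (A ∩ B).card A.card, η t) + S A.card :=
        hsplit _ _ hia.le (hcard_le A)
      have hSB : S B.card =
          (∑ t ∈ Finset.Ico B.card (A ∪ B).card, η t) + S (A ∪ B).card :=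
        hsplit _ _ hbu.le hun
      have hkey : (∑ t ∈ Finset.Ico (A ∩ B).card A.card, η t) <
          ∑ t ∈ Finset.Ico B.card (A ∪ B).card, η t := by
        rw [Finset.sum_Ico_eq_sum_range, Finset.sum_Ico_eq_sum_range]
        have hlen : A.card - (A ∩ B).card = (A ∪ B).card - B.card := by omega
        rw [hlen]
        refine Finset.sum_lt_sum_of_nonempty ?_ ?_
        · exact Finset.nonempty_range_iff.mpr (by omega)
        · intro j hj
          rw [Finset.mem_range] at hj
          exact hmono _ _ (by omega) (by omega) (by omega)
      rw [hμ' A hA0, hμ' B hB0, hμ' (A ∪ B) hU0, hμ' (A ∩ B) hI]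
      linarith
end

section
/- Every antibuoyant fuzzy measure is supermodular: if Δ_i μ(A ∪ {j}) ≥ Δ_j μ(A) for all A ⊆ N \ {i,j} and all distinct i, j ∈ N, then μ is supermodular. -/
/-- Every antibuoyant fuzzy measure is supermodular. -/
theorem antibuoyant_implies_supermodular
    {ι : Type*} [Fintype ι] [DecidableEq ι] (μ : Finset ι → ℝ)
    (h0 : μ ∅ = 0) (h1 : μ Finset.univ = 1)
    (hrange : ∀ A : Finset ι, 0 ≤ μ A ∧ μ A ≤ 1)
    (hmono : ∀ A B : Finset ι, A ⊆ B → μ A ≤ μ B)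
    (hab : ∀ i j : ι, i ≠ j → ∀ A : Finset ι, A ⊆ Finset.univ \ {i, j} →
      μ (insert i (insert j A)) - μ (insert j A) ≥ μ (insert j A) - μ A) :
    ∀ A B : Finset ι, μ (A ∪ B) + μ (A ∩ B) ≥ μ A + μ B := by
  -- pairwise supermodularity
  have local_lem : ∀ (i j : ι), i ≠ j → ∀ A : Finset ι, i ∉ A → j ∉ A →
      μ (insert i (insert j A)) + μ A ≥ μ (insert i A) + μ (insert j A) := by
    intro i j hij A hi hj
    have hsub : A ⊆ Finset.univ \ {i, j} := by
      intro x hx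
      simp only [Finset.mem_sdiff, Finset.mem_univ, true_and, Finset.mem_insert,
        Finset.mem_singleton]
      rintro (rfl | rfl) <;> [exact hi hx; exact hj hx]
    have hsub' : A ⊆ Finset.univ \ {j, i} := by
      intro x hx
      simp only [Finset.mem_sdiff, Finset.mem_univ, true_and, Finset.mem_insert,
        Finset.mem_singleton]
      rintro (rfl | rfl) <;> [exact hj hx; exact hi hx]
    have h1' := hab i j hij A hsub
    have h2' := hab j i hij.symm A hsub'
    rw [Finset.insert_comm] at h2'
    linarith
  -- monotone marginal differences
  have diff_mono : ∀ n : ℕ, ∀ A B : Finset ι, (B \ A).card = n → A ⊆ B → ∀ i, i ∉ B →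
      μ (insert i B) - μ B ≥ μ (insert i A) - μ A := by
    intro n
    induction n with
    | zero =>
      intro A B hcard hAB i hi
      have : B \ A = ∅ := Finset.card_eq_zero.mp hcard
      have : B = A := Finset.Subset.antisymm (fun x hx => by
        by_contra hxA
        exact (Finset.eq_empty_iff_forall_notMem.mp this x)
          (Finset.mem_sdiff.mpr ⟨hx, hxA⟩)) hAB
      rw [this]
    | succ n ih =>
      intro A B hcard hAB i hi
      have hne : (B \ A).Nonempty := by
        rw [← Finset.card_pos, hcard]; omega
      obtain ⟨j, hj⟩ := hne
      rw [Finset.mem_sdiff] at hj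
      set B' := B.erase j with hB'
      have hjB' : j ∉ B' := Finset.notMem_erase j B
      have hAB' : A ⊆ B' := fun x hx =>
        Finset.mem_erase.mpr ⟨fun h => hj.2 (h ▸ hx), hAB hx⟩
      have hBeq : B = insert j B' := (Finset.insert_erase hj.1).symm
      have hiB' : i ∉ B' := fun h => hi (Finset.erase_subset j B h)
      have hij : i ≠ j := fun h => hi (h ▸ hj.1)
      have hcard' : (B' \ A).card = n := by
        have : B' \ A = (B \ A).erase j := by
          ext x
          simp [hB', Finset.mem_erase, Finset.mem_sdiff, and_comm, and_assoc, and_left_comm]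
        rw [this, Finset.card_erase_of_mem (Finset.mem_sdiff.mpr hj), hcard]
        omega
      have step1 := ih A B' hcard' hAB' i hiB'
      have step2 := local_lem i j hij B' hiB' hjB'
      rw [hBeq]
      linarith
  -- main induction
  suffices main : ∀ n : ℕ, ∀ A B : Finset ι, (A \ B).card = n →
      μ (A ∪ B) + μ (A ∩ B) ≥ μ A + μ B by
    intro A B; exact main _ A B rfl
  intro n
  induction n with
  | zero =>
    intro A B hn
    have : A \ B = ∅ := Finset.card_eq_zero.mp hn
    have hAB : A ⊆ B := fun x hx => by
      by_contra hxB
      exact (Finset.eq_empty_iff_forall_notMem.mp this x)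
        (Finset.mem_sdiff.mpr ⟨hx, hxB⟩)
    rw [Finset.union_eq_right.mpr hAB, Finset.inter_eq_left.mpr hAB]
    linarith
  | succ n ih =>
    intro A B hn
    have hne : (A \ B).Nonempty := by
      rw [← Finset.card_pos, hn]; omega
    obtain ⟨i, hi⟩ := hne
    rw [Finset.mem_sdiff] at hi
    set A' := A.erase i with hA'
    have hAeq : A = insert i A' := (Finset.insert_erase hi.1).symm
    have hiA' : i ∉ A' := Finset.notMem_erase i A
    have hcard' : (A' \ B).card = n := by
      have : A' \ B = (A \ B).erase i := by
        ext x
        simp [hA', Finset.mem_erase, Finset.mem_sdiff, and_comm, and_assoc, and_left_comm]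
      rw [this, Finset.card_erase_of_mem (Finset.mem_sdiff.mpr hi), hn]
      omega
    have hIH := ih A' B hcard'
    have hiU : i ∉ A' ∪ B := by
      simp only [Finset.mem_union, not_or]
      exact ⟨hiA', hi.2⟩
    have hsub : A' ⊆ A' ∪ B := Finset.subset_union_left
    have hdm := diff_mono (( A' ∪ B) \ A').card A' (A' ∪ B) rfl hsub i hiU
    have hU : A ∪ B = insert i (A' ∪ B) := by
      rw [hAeq, Finset.insert_union]
    have hI : A ∩ B = A' ∩ B := by
      ext x
      simp only [Finset.mem_inter, hA', Finset.mem_erase]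
      constructor
      · rintro ⟨hx, hxB⟩
        exact ⟨⟨fun h => hi.2 (h ▸ hxB), hx⟩, hxB⟩
      · rintro ⟨⟨_, hx⟩, hxB⟩
        exact ⟨hx, hxB⟩
    rw [hU, hI, hAeq]
    linarith
end

section
/- Let ν be an additive measure on N with |N| = n > 3, let i₀ ∈ N with ν({i₀}) > 0, and let B ⊂ N be a proper subset with |B| > 2 and i₀ ∈ B. For η with 0 < η < ν({i₀}), define μ(A) = ν(A) − η if i₀ ∈ A ⊆ B and A ≠ N, and μ(A) = ν(A) otherwise. Then μ is a superadditive fuzzy measure satisfying μ(A) ≤ ν(A) for all A ⊆ N. -/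
/-- Strategy (S3): discounting by η the values of subsets A with i₀ ∈ A ⊆ S
(S a proper subset with |S| > 2 containing i₀) turns an additive measure
into a superadditive fuzzy measure dominated by ν. -/
theorem additive_to_superadditive
    {ι : Type*} [Fintype ι] [DecidableEq ι]
    (hn : 3 < Fintype.card ι)
    (ν μ : Finset ι → ℝ) (i₀ : ι) (S : Finset ι) (η : ℝ)
    (hν0 : ν ∅ = 0) (hν1 : ν Finset.univ = 1)
    (hνrange : ∀ A : Finset ι, 0 ≤ ν A ∧ ν A ≤ 1)
    (hνadd : ∀ A B : Finset ι, Disjoint A B → ν (A ∪ B) = ν A + ν B)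
    (hi₀ : 0 < ν {i₀})
    (hS : S ⊂ Finset.univ) (hScard : 2 < S.card) (hi₀S : i₀ ∈ S)
    (hη0 : 0 < η) (hη1 : η < ν {i₀})
    (hμa : ∀ A : Finset ι, i₀ ∈ A → A ⊆ S → μ A = ν A - η)
    (hμb : ∀ A : Finset ι, ¬ (i₀ ∈ A ∧ A ⊆ S) → μ A = ν A) :
    (∀ A B : Finset ι, A ⊆ B → μ A ≤ μ B) ∧
    (∀ A : Finset ι, 0 ≤ μ A ∧ μ A ≤ 1) ∧
    (∀ A B : Finset ι, Disjoint A B → μ (A ∪ B) ≥ μ A + μ B) ∧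
    (∀ A : Finset ι, μ A ≤ ν A) := by
  -- ν is monotone
  have hmono : ∀ A B : Finset ι, A ⊆ B → ν A ≤ ν B := by
    intro A B hAB
    have hd : Disjoint A (B \ A) := Finset.disjoint_sdiff
    have hu : A ∪ (B \ A) = B := Finset.union_sdiff_of_subset hAB
    have := hνadd A (B \ A) hd
    rw [hu] at this
    have := (hνrange (B \ A)).1
    linarith
  -- if i₀ ∈ A then ν {i₀} ≤ ν A
  have hsing : ∀ A : Finset ι, i₀ ∈ A → ν {i₀} ≤ ν A := by
    intro A hA
    exact hmono _ _ (Finset.singleton_subset_iff.mpr hA)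
  -- domination
  have hdom : ∀ A : Finset ι, μ A ≤ ν A := by
    intro A
    by_cases h : i₀ ∈ A ∧ A ⊆ S
    · rw [hμa A h.1 h.2]; linarith
    · rw [hμb A h]
  refine ⟨?_, ?_, ?_, hdom⟩
  · -- monotonicity of μ
    intro A B hAB
    by_cases hB : i₀ ∈ B ∧ B ⊆ S
    · by_cases hA : i₀ ∈ A ∧ A ⊆ S
      · rw [hμa A hA.1 hA.2, hμa B hB.1 hB.2]
        have := hmono A B hAB; linarith
      · -- A not discounted, but A ⊆ B ⊆ S, so i₀ ∉ A
        rw [hμb A hA, hμa B hB.1 hB.2]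
        have hi₀A : i₀ ∉ A := fun h => hA ⟨h, hAB.trans hB.2⟩
        have hd : Disjoint A {i₀} := by
          simp [Finset.disjoint_singleton_right, hi₀A]
        have hsub : A ∪ {i₀} ⊆ B := by
          intro x hx
          rcases Finset.mem_union.mp hx with h | h
          · exact hAB h
          · rw [Finset.mem_singleton] at h; subst h; exact hB.1
        have h1 := hνadd A {i₀} hd
        have h2 := hmono _ _ hsub
        linarith
    · have h2 : μ B = ν B := hμb B hB
      have := hdom A
      have := hmono A B hAB
      linarith
  · -- range
    intro A
    constructor
    · by_cases h : i₀ ∈ A ∧ A ⊆ S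
      · rw [hμa A h.1 h.2]
        have := hsing A h.1; linarith
      · rw [hμb A h]; exact (hνrange A).1
    · have := hdom A
      have := (hνrange A).2
      linarith
  · -- superadditivity
    intro A B hAB
    by_cases h : i₀ ∈ A ∪ B ∧ A ∪ B ⊆ S
    · rw [hμa _ h.1 h.2]
      rcases Finset.mem_union.mp h.1 with hA | hB'
      · have hBno : i₀ ∉ B := fun hb => (Finset.disjoint_left.mp hAB hA) hb
        rw [hμa A hA ((Finset.subset_union_left).trans h.2),
            hμb B (fun hb => hBno hb.1),
            hνadd A B hAB]
        linarith
      · have hAno : i₀ ∉ A := fun ha => (Finset.disjoint_left.mp hAB ha) hB'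
        rw [hμa B hB' ((Finset.subset_union_right).trans h.2),
            hμb A (fun ha => hAno ha.1),
            hνadd A B hAB]
        linarith
    · rw [hμb _ h, hνadd A B hAB]
      have := hdom A
      have := hdom B
      linarith
end

section
/- Let μ be a superadditive fuzzy measure on N, A a nonempty proper subset of N, and set l₇ = max over nonempty B ⊂ A of (μ(B)+μ(A\B)) and l₈ = min over C with A ⊂ C ⊂ N of (μ(C)−μ(C\A)) (with the convention that empty max/min are 0 and 1 respectively). If the value μ(A) is replaced by any value t ∈ [l₇, l₈], the resulting set function is still a superadditive fuzzy measure. -/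
/-- Allowable range for superadditive measures: replacing μ(A) with any value
t ∈ [l₇, l₈], where l₇ = max_{∅≠B⊂A} (μ(B)+μ(A\B)) and
l₈ = min_{A⊂C} (μ(C)−μ(C\A)) (empty max = 0, empty min = 1),
keeps the set function a superadditive fuzzy measure. -/
theorem superadditive_allowable_range
    {ι : Type*} [Fintype ι] [DecidableEq ι] (μ : Finset ι → ℝ)
    (h0 : μ ∅ = 0) (h1 : μ Finset.univ = 1)
    (hrange : ∀ A : Finset ι, 0 ≤ μ A ∧ μ A ≤ 1)
    (hmono : ∀ A B : Finset ι, A ⊆ B → μ A ≤ μ B)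
    (hsuper : ∀ A B : Finset ι, Disjoint A B → μ (A ∪ B) ≥ μ A + μ B)
    (A : Finset ι) (hA1 : A ≠ ∅) (hA2 : A ≠ Finset.univ) (t : ℝ)
    (hl : (A.powerset.filter (fun B => B ≠ ∅ ∧ B ≠ A)).fold max 0
            (fun B => μ B + μ (A \ B)) ≤ t)
    (hu : t ≤ ((Finset.univ : Finset (Finset ι)).filter (fun C => A ⊂ C)).fold min 1
            (fun C => μ C - μ (C \ A))) :
    (∀ S T : Finset ι, S ⊆ T → Function.update μ A t S ≤ Function.update μ A t T) ∧
    (∀ S : Finset ι, 0 ≤ Function.update μ A t S ∧ Function.update μ A t S ≤ 1) ∧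
    (∀ S T : Finset ι, Disjoint S T →
      Function.update μ A t (S ∪ T) ≥ Function.update μ A t S + Function.update μ A t T) := by
  have hne : ∀ S : Finset ι, S ≠ A → Function.update μ A t S = μ S :=
    fun S h => Function.update_of_ne h t μ
  have hAA : Function.update μ A t A = t := Function.update_self A t μ
  have hmax : ∀ B : Finset ι, B ⊆ A → B ≠ ∅ → B ≠ A → μ B + μ (A \ B) ≤ t := by
    intro B hb h2 h3
    refine le_trans ?_ hl
    exact (Finset.le_fold_max _).mpr (Or.inr ⟨B,
      Finset.mem_filter.mpr ⟨Finset.mem_powerset.mpr hb, h2, h3⟩, le_refl _⟩)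
  have hmin : ∀ C : Finset ι, A ⊂ C → t ≤ μ C - μ (C \ A) := by
    intro C h
    refine le_trans hu ?_
    exact (Finset.fold_min_le _).mpr (Or.inr ⟨C,
      Finset.mem_filter.mpr ⟨Finset.mem_univ C, h⟩, le_refl _⟩)
  have ht0 : 0 ≤ t := le_trans ((Finset.le_fold_max _).mpr (Or.inl le_rfl)) hl
  have ht1 : t ≤ 1 := by
    have h := hmin Finset.univ (lt_of_le_of_ne (Finset.subset_univ A) hA2)
    rw [h1] at h
    linarith [(hrange (Finset.univ \ A)).1]
  refine ⟨?_, ?_, ?_⟩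
  · intro S T hST
    by_cases hS : S = A <;> by_cases hT : T = A
    · rw [hS, hT]
    · rw [hS, hAA, hne T hT]
      have hAT : A ⊂ T := lt_of_le_of_ne (hS ▸ hST) (Ne.symm hT)
      have := hmin T hAT
      linarith [(hrange (T \ A)).1]
    · rw [hne S hS, hT, hAA]
      have hSA : S ⊆ A := hT ▸ hST
      by_cases hS0 : S = ∅
      · rw [hS0, h0]; exact ht0
      · have := hmax S hSA hS0 hS
        linarith [(hrange (A \ S)).1]
    · rw [hne S hS, hne T hT]; exact hmono S T hST
  · intro S
    by_cases hS : S = A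
    · rw [hS, hAA]; exact ⟨ht0, ht1⟩
    · rw [hne S hS]; exact hrange S
  · intro S T hdisj
    by_cases hST : S ∪ T = A
    · by_cases hS : S = A
      · have hT : T = ∅ := by
          have hsub : T ⊆ A := hST ▸ Finset.subset_union_right
          rw [hS] at hdisj
          exact Finset.eq_empty_of_forall_notMem fun x hx =>
            (Finset.disjoint_right.mp hdisj hx) (hsub hx)
        rw [hT, Finset.union_empty, hS, hAA, hne ∅ (Ne.symm hA1), h0]
        linarith
      · by_cases hT : T = A
        · have hS0 : S = ∅ := by
            have hsub : S ⊆ A := hST ▸ Finset.subset_union_left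
            rw [hT] at hdisj
            exact Finset.eq_empty_of_forall_notMem fun x hx =>
              (Finset.disjoint_left.mp hdisj hx) (hsub hx)
          rw [hS0, Finset.empty_union, hT, hAA, hne ∅ (Ne.symm hA1), h0]
          linarith
        · have hS0 : S ≠ ∅ := by
            rintro rfl
            rw [Finset.empty_union] at hST
            exact hT hST
          have hSA : S ⊆ A := hST ▸ Finset.subset_union_left
          have hT' : A \ S = T := by
            rw [← hST, Finset.union_sdiff_left]
            exact Finset.sdiff_eq_self_of_disjoint hdisj.symm
          have := hmax S hSA hS0 hS
          rw [hST, hAA, hne S hS, hne T hT, ← hT']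
          linarith
    · by_cases hS : S = A
      · rw [hS] at hdisj hST ⊢
        have hT : T ≠ A := by
          rintro rfl
          exact hA1 ((Finset.disjoint_self_iff_empty _).mp hdisj)
        have hT0 : T ≠ ∅ := by
          rintro rfl
          exact hST (Finset.union_empty A)
        have hsub : A ⊂ A ∪ T := by
          refine (Finset.ssubset_iff_of_subset Finset.subset_union_left).mpr ?_
          obtain ⟨x, hx⟩ := Finset.nonempty_iff_ne_empty.mpr hT0
          exact ⟨x, Finset.mem_union_right _ hx, Finset.disjoint_right.mp hdisj hx⟩
        have h1' := hmin (A ∪ T) hsub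
        have h2' : (A ∪ T) \ A = T := by
          rw [Finset.union_sdiff_left]
          exact Finset.sdiff_eq_self_of_disjoint hdisj.symm
        rw [h2'] at h1'
        rw [hne (A ∪ T) hST, hAA, hne T hT]
        linarith
      · by_cases hT : T = A
        · rw [hT] at hdisj hST ⊢
          have hS' : S ≠ A := by
            rintro rfl
            exact hA1 ((Finset.disjoint_self_iff_empty _).mp hdisj)
          have hS0 : S ≠ ∅ := by
            rintro rfl
            exact hST (Finset.empty_union A)
          have hsub : A ⊂ S ∪ A := by
            refine (Finset.ssubset_iff_of_subset Finset.subset_union_right).mpr ?_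
            obtain ⟨x, hx⟩ := Finset.nonempty_iff_ne_empty.mpr hS0
            exact ⟨x, Finset.mem_union_left _ hx, Finset.disjoint_left.mp hdisj hx⟩
          have h1' := hmin (S ∪ A) hsub
          have h2' : (S ∪ A) \ A = S := by
            rw [Finset.union_sdiff_right]
            exact Finset.sdiff_eq_self_of_disjoint hdisj
          rw [h2'] at h1'
          rw [hne (S ∪ A) hST, hAA, hne S hS']
          linarith
        · rw [hne (S ∪ T) hST, hne S hS, hne T hT]
          exact hsuper S T hdisj
end

section
/- Let μ be a supermodular fuzzy measure on N and let A be a nonempty proper subset of N. Define l₁ = max_{i,j∈A, i≠j} (μ(A\{i}) + μ(A\{j}) − μ(A\{i,j})), l₂ = max_{i,j∉A, i≠j} (μ(A∪{i}) + μ(A∪{j}) − μ(A∪{i,j})), and l₃ = min_{i∈A, j∉A} (μ(A∪{j}) − μ((A\{i})∪{j}) + μ(A\{i})) (using conventions 0 for empty max and 1 for empty min). Then replacing μ(A) with any value t ∈ [max(l₁,l₂), l₃] yields a set function that is still a supermodular fuzzy measure. -/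
/-- Allowable range for supermodular measures: replacing μ(A) with any
t ∈ [max(l₁,l₂), l₃] keeps the set function a supermodular fuzzy measure. -/
theorem supermodular_allowable_range
    {ι : Type*} [Fintype ι] [DecidableEq ι]
    (hcard : 2 ≤ Fintype.card ι) (μ : Finset ι → ℝ)
    (h0 : μ ∅ = 0) (h1 : μ Finset.univ = 1)
    (hrange : ∀ A : Finset ι, 0 ≤ μ A ∧ μ A ≤ 1)
    (hmono : ∀ A B : Finset ι, A ⊆ B → μ A ≤ μ B)
    (hsuper : ∀ A B : Finset ι, μ (A ∪ B) + μ (A ∩ B) ≥ μ A + μ B)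
    (A : Finset ι) (hA1 : A ≠ ∅) (hA2 : A ≠ Finset.univ) (t : ℝ)
    (hl1 : ((A ×ˢ A).filter (fun p => p.1 ≠ p.2)).fold max 0
            (fun p => μ (A \ {p.1}) + μ (A \ {p.2}) - μ (A \ {p.1, p.2})) ≤ t)
    (hl2 : (((Finset.univ \ A) ×ˢ (Finset.univ \ A)).filter (fun p => p.1 ≠ p.2)).fold max 0
            (fun p => μ (A ∪ {p.1}) + μ (A ∪ {p.2}) - μ (A ∪ {p.1, p.2})) ≤ t)
    (hl3 : t ≤ (A ×ˢ (Finset.univ \ A)).fold min 1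
            (fun p => μ (A ∪ {p.2}) - μ ((A \ {p.1}) ∪ {p.2}) + μ (A \ {p.1}))) :
    (∀ S T : Finset ι, S ⊆ T → Function.update μ A t S ≤ Function.update μ A t T) ∧
    (∀ S : Finset ι, 0 ≤ Function.update μ A t S ∧ Function.update μ A t S ≤ 1) ∧
    (∀ S T : Finset ι,
      Function.update μ A t (S ∪ T) + Function.update μ A t (S ∩ T) ≥
        Function.update μ A t S + Function.update μ A t T) := by
  classical
  rw [Finset.fold_max_le] at hl1 hl2
  rw [Finset.le_fold_min] at hl3
  obtain ⟨ht0, hl1⟩ := hl1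
  obtain ⟨-, hl2⟩ := hl2
  obtain ⟨-, hl3⟩ := hl3
  have hL1 : ∀ i j : ι, i ∈ A → j ∈ A → i ≠ j →
      μ (A \ {i}) + μ (A \ {j}) - μ (A \ {i, j}) ≤ t := by
    intro i j hi hj hij
    exact hl1 (i, j) (by simp [Finset.mem_filter, Finset.mem_product, hi, hj, hij])
  have hL2 : ∀ i j : ι, i ∉ A → j ∉ A → i ≠ j →
      μ (A ∪ {i}) + μ (A ∪ {j}) - μ (A ∪ {i, j}) ≤ t := by
    intro i j hi hj hij
    exact hl2 (i, j) (by simp [Finset.mem_filter, Finset.mem_product, hi, hj, hij])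
  have hL3 : ∀ i j : ι, i ∈ A → j ∉ A →
      t ≤ μ (A ∪ {j}) - μ ((A \ {i}) ∪ {j}) + μ (A \ {i}) := by
    intro i j hi hj
    exact hl3 (i, j) (by simp [Finset.mem_filter, Finset.mem_product, hi, hj])
  have hupd : ∀ S : Finset ι, Function.update μ A t S = if S = A then t else μ S :=
    fun S => Function.update_apply μ A t S
  obtain ⟨i0, hi0⟩ := Finset.nonempty_iff_ne_empty.mpr hA1
  -- lower bound: for every proper subset S of A, μ S ≤ t
  have hlow : ∀ S : Finset ι, S ⊆ A → S ≠ A → μ S ≤ t := by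
    intro S hSA hSne
    obtain ⟨i, hiA, hiS⟩ := Finset.exists_of_ssubset (hSA.ssubset_of_ne hSne)
    by_cases hj : ∃ j ∈ A, j ≠ i
    · obtain ⟨j, hjA, hji⟩ := hj
      have h1 := hL1 i j hiA hjA (Ne.symm hji)
      have h2 : μ S ≤ μ (A \ {i}) := by
        refine hmono _ _ ?_
        intro x hx
        exact Finset.mem_sdiff.mpr ⟨hSA hx, by
          simp only [Finset.mem_singleton]
          exact fun he => hiS (he ▸ hx)⟩
      have h3 : μ (A \ {i, j}) ≤ μ (A \ {j}) := by
        refine hmono _ _ (Finset.sdiff_subset_sdiff le_rfl ?_)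
        intro x hx
        simp only [Finset.mem_singleton] at hx
        simp [hx]
      linarith
    · push_neg at hj
      have hSempty : S = ∅ := by
        ext x
        simp only [Finset.notMem_empty, iff_false]
        intro hx
        exact hiS ((hj x (hSA hx)) ▸ hx)
      rw [hSempty, h0]; exact ht0
  -- upper bound: for every proper superset T of A, t ≤ μ T
  have hhigh : ∀ T : Finset ι, A ⊆ T → T ≠ A → t ≤ μ T := by
    intro T hAT hTne
    obtain ⟨j, hjT, hjA⟩ := Finset.exists_of_ssubset (hAT.ssubset_of_ne (Ne.symm hTne))
    have h1 := hL3 i0 j hi0 hjA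
    have h2 : μ (A \ {i0}) ≤ μ ((A \ {i0}) ∪ {j}) := hmono _ _ Finset.subset_union_left
    have h3 : μ (A ∪ {j}) ≤ μ T := by
      refine hmono _ _ (Finset.union_subset hAT ?_)
      simpa using hjT
    linarith
  have ht1 : t ≤ 1 := by
    have := hhigh Finset.univ (Finset.subset_univ A) (Ne.symm hA2)
    rwa [h1] at this
  -- the key mixed case: S = A, T arbitrary ≠ A
  have caseA : ∀ T : Finset ι, T ≠ A →
      Function.update μ A t A + Function.update μ A t T ≤
        Function.update μ A t (A ∪ T) + Function.update μ A t (A ∩ T) := by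
    intro T hT
    by_cases hTA : T ⊆ A
    · rw [Finset.union_eq_left.mpr hTA, Finset.inter_eq_right.mpr hTA]
    · by_cases hAT : A ⊆ T
      · rw [Finset.union_eq_right.mpr hAT, Finset.inter_eq_left.mpr hAT]
        linarith [le_refl (Function.update μ A t T)]
      · obtain ⟨j, hjT, hjA⟩ := Finset.not_subset.mp hTA
        obtain ⟨i, hiA, hiT⟩ := Finset.not_subset.mp hAT
        have hUA : A ∪ T ≠ A := fun h => hjA (h ▸ Finset.mem_union_right A hjT)
        have hIA : A ∩ T ≠ A := by
          intro h
          rw [← h] at hiA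
          exact hiT (Finset.mem_inter.mp hiA).2
        rw [hupd A, hupd T, hupd (A ∪ T), hupd (A ∩ T), if_pos rfl, if_neg hT,
          if_neg hUA, if_neg hIA]
        have hkey := hL3 i j hiA hjA
        set B := A \ {i} with hB
        have hBA : B ⊆ A := Finset.sdiff_subset
        have e1 : (A ∪ {j}) ∪ (B ∪ T) = A ∪ T := by
          ext x
          simp only [Finset.mem_union, Finset.mem_singleton, hB, Finset.mem_sdiff]
          constructor
          · rintro ((h | rfl) | (⟨h, -⟩ | h))
            · exact Or.inl h
            · exact Or.inr hjT
            · exact Or.inl h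
            · exact Or.inr h
          · rintro (h | h)
            · exact Or.inl (Or.inl h)
            · exact Or.inr (Or.inr h)
        have e2 : (A ∪ {j}) ∩ (B ∪ T) = B ∪ {j} := by
          ext x
          simp only [Finset.mem_union, Finset.mem_inter, Finset.mem_singleton, hB,
            Finset.mem_sdiff]
          constructor
          · rintro ⟨h1 | rfl, h2⟩
            · rcases h2 with h2 | h2
              · exact Or.inl h2
              · exact Or.inl ⟨h1, fun he => hiT (he ▸ h2)⟩
            · exact Or.inr rfl
          · rintro (⟨h1, h2⟩ | rfl)
            · exact ⟨Or.inl h1, Or.inl ⟨h1, h2⟩⟩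
            · exact ⟨Or.inr rfl, Or.inr hjT⟩
        have e3 : B ∩ T = A ∩ T := by
          ext x
          simp only [Finset.mem_inter, hB, Finset.mem_sdiff, Finset.mem_singleton]
          constructor
          · rintro ⟨⟨h1, -⟩, h3⟩
            exact ⟨h1, h3⟩
          · rintro ⟨h1, h3⟩
            exact ⟨⟨h1, fun he => hiT (he ▸ h3)⟩, h3⟩
        have s1 := hsuper (A ∪ {j}) (B ∪ T)
        rw [e1, e2] at s1
        have s2 := hsuper B T
        rw [e3] at s2
        linarith
  refine ⟨?_, ?_, ?_⟩
  · -- monotone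
    intro S T hST
    rw [hupd S, hupd T]
    by_cases hS : S = A <;> by_cases hT : T = A
    · simp [hS, hT]
    · rw [if_pos hS, if_neg hT]
      exact hhigh T (hS ▸ hST) hT
    · rw [if_neg hS, if_pos hT]
      exact hlow S (hT ▸ hST) hS
    · rw [if_neg hS, if_neg hT]
      exact hmono S T hST
  · -- range
    intro S
    rw [hupd S]
    split_ifs with h
    · exact ⟨ht0, ht1⟩
    · exact hrange S
  · -- supermodularity
    intro S T
    by_cases hS : S = A
    · by_cases hT : T = A
      · rw [hS, hT, Finset.union_self, Finset.inter_self]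
      · rw [hS]
        exact caseA T hT
    · by_cases hT : T = A
      · rw [hT, Finset.union_comm S A, Finset.inter_comm S A]
        linarith [caseA S hS]
      · by_cases hU : S ∪ T = A
        · by_cases hI : S ∩ T = A
          · exact absurd (subset_antisymm (hU ▸ Finset.subset_union_left)
              (hI ▸ Finset.inter_subset_left)) hS
          · rw [hupd (S ∪ T), hupd (S ∩ T), hupd S, hupd T, if_pos hU, if_neg hI,
              if_neg hS, if_neg hT]
            have hSsub : S ⊆ A := hU ▸ Finset.subset_union_left
            have hTsub : T ⊆ A := hU ▸ Finset.subset_union_right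
            obtain ⟨i, hiT, hiS⟩ : ∃ i, i ∈ T ∧ i ∉ S := by
              by_contra h
              push_neg at h
              exact hS (by rw [← hU, Finset.union_eq_left.mpr h])
            obtain ⟨j, hjS, hjT⟩ : ∃ j, j ∈ S ∧ j ∉ T := by
              by_contra h
              push_neg at h
              exact hT (by rw [← hU, Finset.union_eq_right.mpr h])
            have hij : i ≠ j := fun h => hjT (h ▸ hiT)
            have hkey := hL1 i j (hTsub hiT) (hSsub hjS) hij
            have hSS' : S ⊆ A \ {i} := by
              intro x hx
              refine Finset.mem_sdiff.mpr ⟨hSsub hx, ?_⟩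
              simp only [Finset.mem_singleton]
              exact fun he => hiS (he ▸ hx)
            have hTT' : T ⊆ A \ {j} := by
              intro x hx
              refine Finset.mem_sdiff.mpr ⟨hTsub hx, ?_⟩
              simp only [Finset.mem_singleton]
              exact fun he => hjT (he ▸ hx)
            have e4 : (A \ {i}) ∩ (A \ {j}) = A \ {i, j} := by
              ext x
              simp only [Finset.mem_inter, Finset.mem_sdiff, Finset.mem_singleton,
                Finset.mem_insert]
              tauto
            have e5 : S ∩ ((A \ {i}) ∩ T) = S ∩ T := by
              ext x
              simp only [Finset.mem_inter]
              constructor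
              · rintro ⟨h1, -, h3⟩
                exact ⟨h1, h3⟩
              · rintro ⟨h1, h3⟩
                exact ⟨h1, Finset.mem_sdiff.mp (hSS' h1) |>.1 |> (fun _ => hSS' h1), h3⟩
            have e6 : T ∩ ((A \ {i}) ∩ (A \ {j})) = (A \ {i}) ∩ T := by
              ext x
              simp only [Finset.mem_inter]
              constructor
              · rintro ⟨h1, h2, -⟩
                exact ⟨h2, h1⟩
              · rintro ⟨h2, h1⟩
                exact ⟨h1, h2, hTT' h1⟩
            have s1 := hsuper S ((A \ {i}) ∩ T)
            rw [e5] at s1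
            have m1 : μ (S ∪ ((A \ {i}) ∩ T)) ≤ μ (A \ {i}) :=
              hmono _ _ (Finset.union_subset hSS' Finset.inter_subset_left)
            have s2 := hsuper T ((A \ {i}) ∩ (A \ {j}))
            have m2 : μ (T ∪ ((A \ {i}) ∩ (A \ {j}))) ≤ μ (A \ {j}) :=
              hmono _ _ (Finset.union_subset hTT' Finset.inter_subset_right)
            rw [e6, e4] at s2
            rw [e4] at m2
            linarith
        · by_cases hI : S ∩ T = A
          · rw [hupd (S ∪ T), hupd (S ∩ T), hupd S, hupd T, if_neg hU, if_pos hI,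
              if_neg hS, if_neg hT]
            have hAS : A ⊆ S := hI ▸ Finset.inter_subset_left
            have hAT : A ⊆ T := hI ▸ Finset.inter_subset_right
            have hST : ∀ x, x ∈ S → x ∈ T → x ∈ A := by
              intro x h1 h2
              rw [← hI]
              exact Finset.mem_inter.mpr ⟨h1, h2⟩
            obtain ⟨i, hiS, hiA⟩ := Finset.exists_of_ssubset (hAS.ssubset_of_ne (Ne.symm hS))
            obtain ⟨j, hjT, hjA⟩ := Finset.exists_of_ssubset (hAT.ssubset_of_ne (Ne.symm hT))
            have hij : i ≠ j := by
              rintro rfl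
              exact hiA (hST i hiS hjT)
            have hjS : j ∉ S := fun h => hjA (hST j h hjT)
            have hkey := hL2 i j hiA hjA hij
            have e7 : T ∪ (S ∪ {j}) = S ∪ T := by
              ext x
              simp only [Finset.mem_union, Finset.mem_singleton]
              constructor
              · rintro (h | h | rfl)
                · exact Or.inr h
                · exact Or.inl h
                · exact Or.inr hjT
              · rintro (h | h)
                · exact Or.inr (Or.inl h)
                · exact Or.inl h
            have e8 : T ∩ (S ∪ {j}) = A ∪ {j} := by
              ext x
              simp only [Finset.mem_inter, Finset.mem_union, Finset.mem_singleton]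
              constructor
              · rintro ⟨h1, h2 | rfl⟩
                · exact Or.inl (hST x h2 h1)
                · exact Or.inr rfl
              · rintro (h | rfl)
                · exact ⟨hAT h, Or.inl (hAS h)⟩
                · exact ⟨hjT, Or.inr rfl⟩
            have e9 : S ∪ (A ∪ {i, j}) = S ∪ {j} := by
              ext x
              simp only [Finset.mem_union, Finset.mem_singleton, Finset.mem_insert]
              constructor
              · rintro (h | h | rfl | rfl)
                · exact Or.inl h
                · exact Or.inl (hAS h)
                · exact Or.inl hiS
                · exact Or.inr rfl
              · rintro (h | rfl)
                · exact Or.inl h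
                · exact Or.inr (Or.inr (Or.inr rfl))
            have e10 : S ∩ (A ∪ {i, j}) = A ∪ {i} := by
              ext x
              simp only [Finset.mem_inter, Finset.mem_union, Finset.mem_singleton,
                Finset.mem_insert]
              constructor
              · rintro ⟨h1, h2 | rfl | rfl⟩
                · exact Or.inl h2
                · exact Or.inr rfl
                · exact absurd h1 hjS
              · rintro (h | rfl)
                · exact ⟨hAS h, Or.inl h⟩
                · exact ⟨hiS, Or.inr (Or.inl rfl)⟩
            have s1 := hsuper T (S ∪ {j})
            rw [e7, e8] at s1
            have s2 := hsuper S (A ∪ {i, j})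
            rw [e9, e10] at s2
            linarith
          · rw [hupd (S ∪ T), hupd (S ∩ T), hupd S, hupd T, if_neg hU, if_neg hI,
              if_neg hS, if_neg hT]
            exact hsuper S T
end

section
/- Let ν be a fuzzy measure on N, 1 ≤ k < n, and K ∈ (0,1]. Suppose M = max_{|B|=k} ν(B) > 0. Define μ(A) = K·ν(A)/M for |A| ≤ k, and μ(A) = K + ((|A|−k−1)/(n−k−1))·(1−K) for |A| ≥ k+1 (when n > k+1; for |A| = n set μ(N)=1). Then μ is a fuzzy measure, i.e., it is monotone with μ(∅)=0 and μ(N)=1. -/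
/-- The k-interactive construction yields a fuzzy measure. -/
theorem k_interactive_construction
    {ι : Type*} [Fintype ι] [DecidableEq ι]
    (ν μ : Finset ι → ℝ) (k : ℕ) (K : ℝ)
    (hk1 : 1 ≤ k) (hk2 : k < Fintype.card ι)
    (hK0 : 0 < K) (hK1 : K ≤ 1)
    (hν0 : ν ∅ = 0) (hν1 : ν Finset.univ = 1)
    (hνrange : ∀ A : Finset ι, 0 ≤ ν A ∧ ν A ≤ 1)
    (hνmono : ∀ A B : Finset ι, A ⊆ B → ν A ≤ ν B)
    (M : ℝ)
    (hM : M = ((Finset.univ : Finset (Finset ι)).filter (fun B => B.card = k)).fold max 0 ν)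
    (hMpos : 0 < M)
    (hμa : ∀ A : Finset ι, A.card ≤ k → μ A = K * ν A / M)
    (hμb : ∀ A : Finset ι, k + 1 ≤ A.card → A.card < Fintype.card ι →
      μ A = K + ((A.card : ℝ) - k - 1) / ((Fintype.card ι : ℝ) - k - 1) * (1 - K))
    (hμc : μ Finset.univ = 1) :
    (∀ A B : Finset ι, A ⊆ B → μ A ≤ μ B) ∧
    μ ∅ = 0 ∧ μ Finset.univ = 1 ∧
    (∀ A : Finset ι, 0 ≤ μ A ∧ μ A ≤ 1) := by
  set n := Fintype.card ι with hn
  -- every k-set's value is at most M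
  have hle_M : ∀ B : Finset ι, B.card = k → ν B ≤ M := by
    intro B hB
    rw [hM, Finset.le_fold_max]
    exact Or.inr ⟨B, by simpa using hB, le_refl _⟩
  -- for small sets, ν A ≤ M
  have hνleM : ∀ A : Finset ι, A.card ≤ k → ν A ≤ M := by
    intro A hA
    obtain ⟨u, hAu, -, hu⟩ := Finset.exists_subsuperset_card_eq (Finset.subset_univ A)
      hA (by simpa [Finset.card_univ] using hk2.le)
    exact (hνmono A u hAu).trans (hle_M u hu)
  -- bounds for small sets
  have hsmall : ∀ A : Finset ι, A.card ≤ k → 0 ≤ μ A ∧ μ A ≤ K := by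
    intro A hA
    rw [hμa A hA]
    constructor
    · exact div_nonneg (mul_nonneg hK0.le (hνrange A).1) hMpos.le
    · rw [div_le_iff₀ hMpos]
      exact mul_le_mul_of_nonneg_left (hνleM A hA) hK0.le
  -- bounds for mid sets
  have hmid : ∀ A : Finset ι, k + 1 ≤ A.card → A.card < n → K ≤ μ A ∧ μ A ≤ 1 := by
    intro A h1 h2
    rw [hμb A h1 h2]
    have hd : (0:ℝ) < (n : ℝ) - k - 1 := by
      have : k + 1 < n := lt_of_le_of_lt h1 h2
      have : (k:ℝ) + 1 < (n:ℝ) := by exact_mod_cast this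
      linarith
    have hnum0 : (0:ℝ) ≤ (A.card : ℝ) - k - 1 := by
      have : (k:ℝ) + 1 ≤ (A.card : ℝ) := by exact_mod_cast h1
      linarith
    have hnumle : (A.card : ℝ) - k - 1 ≤ (n:ℝ) - k - 1 := by
      have : (A.card : ℝ) ≤ (n:ℝ) := by exact_mod_cast h2.le
      linarith
    have hratio0 : 0 ≤ ((A.card : ℝ) - k - 1) / ((n : ℝ) - k - 1) := by positivity
    have hratio1 : ((A.card : ℝ) - k - 1) / ((n : ℝ) - k - 1) ≤ 1 :=
      (div_le_one hd).mpr hnumle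
    constructor
    · nlinarith
    · nlinarith
  -- upper bound K ≤ μ B for large B
  have hlarge : ∀ B : Finset ι, k + 1 ≤ B.card → K ≤ μ B ∧ μ B ≤ 1 := by
    intro B h1
    have hBn : B.card ≤ n := by
      simpa [Finset.card_univ] using Finset.card_le_card (Finset.subset_univ B)
    rcases lt_or_eq_of_le hBn with h2 | h2
    · exact hmid B h1 h2
    · have : B = Finset.univ := Finset.eq_univ_of_card B h2
      rw [this, hμc]; exact ⟨hK1, le_refl 1⟩
  refine ⟨?_, ?_, hμc, ?_⟩
  · intro A B hAB
    by_cases hA : A.card ≤ k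
    · by_cases hB : B.card ≤ k
      · rw [hμa A hA, hμa B hB]
        have := hνmono A B hAB
        have hKν : K * ν A ≤ K * ν B := mul_le_mul_of_nonneg_left this hK0.le
        gcongr
      · exact (hsmall A hA).2.trans (hlarge B (by omega)).1
    · push_neg at hA
      have hB1 : k + 1 ≤ B.card := le_trans hA (Finset.card_le_card hAB)
      have hBn : B.card ≤ n := by
        simpa [Finset.card_univ] using Finset.card_le_card (Finset.subset_univ B)
      rcases lt_or_eq_of_le hBn with h2 | h2
      · -- both mid
        have hA2 : A.card < n := lt_of_le_of_lt (Finset.card_le_card hAB) h2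
        rw [hμb A hA hA2, hμb B hB1 h2]
        have hd : (0:ℝ) < (n : ℝ) - k - 1 := by
          have hlt : k + 1 < n := lt_of_le_of_lt hB1 h2
          have : (k:ℝ) + 1 < (n:ℝ) := by exact_mod_cast hlt
          linarith
        have hcc : (A.card : ℝ) ≤ (B.card : ℝ) := by
          exact_mod_cast Finset.card_le_card hAB
        have h1K : (0:ℝ) ≤ 1 - K := by linarith
        have hdiv : ((A.card : ℝ) - k - 1) / ((n : ℝ) - k - 1) ≤
            ((B.card : ℝ) - k - 1) / ((n : ℝ) - k - 1) := by
          gcongr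
        nlinarith
      · have : B = Finset.univ := Finset.eq_univ_of_card B h2
        rw [this, hμc]
        exact (hlarge A hA).2
  · rw [hμa ∅ (by simp), hν0]; ring
  · intro A
    by_cases hA : A.card ≤ k
    · exact ⟨(hsmall A hA).1, (hsmall A hA).2.trans hK1⟩
    · push_neg at hA
      exact ⟨hK0.le.trans (hlarge A hA).1, (hlarge A hA).2⟩
end

section
/- Let ν be a fuzzy measure on N and 1 ≤ k < n with M = max_{|B|=k} ν(B) > 0. Define μ(A) = ν(A)/M for |A| ≤ k and, recursively on cardinality, μ(A) = max_{B ⊂ A, |B| = |A|−1} μ(B) for |A| ≥ k+1. Then μ is a fuzzy measure and satisfies the k-maxitivity property μ(A) = max_{B ⊂ A, |B| = k} μ(B) for all A with |A| ≥ k+1. -/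
/-- The k-maxitive construction: μ(A) = ν(A)/M for |A| ≤ k, and recursively
μ(A) = max_{B⊂A, |B|=|A|−1} μ(B) for |A| ≥ k+1, yields a k-maxitive fuzzy measure. -/
theorem k_maxitive_construction
    {ι : Type*} [Fintype ι] [DecidableEq ι]
    (ν μ : Finset ι → ℝ) (k : ℕ)
    (hk1 : 1 ≤ k) (hk2 : k < Fintype.card ι)
    (hν0 : ν ∅ = 0) (hν1 : ν Finset.univ = 1)
    (hνrange : ∀ A : Finset ι, 0 ≤ ν A ∧ ν A ≤ 1)
    (hνmono : ∀ A B : Finset ι, A ⊆ B → ν A ≤ ν B)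
    (M : ℝ)
    (hM : M = ((Finset.univ : Finset (Finset ι)).filter (fun B => B.card = k)).fold max 0 ν)
    (hMpos : 0 < M)
    (hμa : ∀ A : Finset ι, A.card ≤ k → μ A = ν A / M)
    (hμb : ∀ A : Finset ι, k + 1 ≤ A.card →
      μ A = (A.powerset.filter (fun B => B.card + 1 = A.card)).fold max 0 μ) :
    (∀ A B : Finset ι, A ⊆ B → μ A ≤ μ B) ∧
    μ ∅ = 0 ∧ μ Finset.univ = 1 ∧
    (∀ A : Finset ι, 0 ≤ μ A ∧ μ A ≤ 1) ∧
    (∀ A : Finset ι, k + 1 ≤ A.card →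
      μ A = (A.powerset.filter (fun B => B.card = k)).fold max 0 μ) := by
  classical
  have foldnn : ∀ (s : Finset (Finset ι)) (f : Finset ι → ℝ),
      (0:ℝ) ≤ s.fold max 0 f := fun s f => (Finset.le_fold_max _).mpr (Or.inl le_rfl)
  have hμnn_k : ∀ A : Finset ι, A.card ≤ k → 0 ≤ μ A := by
    intro A hA
    rw [hμa A hA]
    exact div_nonneg (hνrange A).1 hMpos.le
  -- key lemma: for k ≤ |A|, μ A equals the max of μ over k-subsets of A
  have key : ∀ n (A : Finset ι), A.card = n → k ≤ A.card →
      μ A = (A.powerset.filter (fun B => B.card = k)).fold max 0 μ := by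
    intro n
    induction n with
    | zero => intro A hA hk; omega
    | succ m ih =>
      intro A hcard hkA
      rcases eq_or_lt_of_le hkA with heq | hlt
      · -- |A| = k
        have hfilter : A.powerset.filter (fun B => B.card = k) = {A} := by
          ext B
          simp only [Finset.mem_filter, Finset.mem_powerset, Finset.mem_singleton]
          constructor
          · rintro ⟨hB, hBc⟩
            exact Finset.eq_of_subset_of_card_le hB (by omega)
          · rintro rfl; exact ⟨Finset.Subset.refl _, heq.symm⟩
        rw [hfilter, Finset.fold_singleton, max_eq_left (hμnn_k A heq.ge)]
      · -- |A| ≥ k+1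
        have hA1 : k + 1 ≤ A.card := hlt
        rw [hμb A hA1]
        have hcongr : ∀ B ∈ A.powerset.filter (fun B => B.card + 1 = A.card),
            μ B = (B.powerset.filter (fun C => C.card = k)).fold max 0 μ := by
          intro B hB
          simp only [Finset.mem_filter, Finset.mem_powerset] at hB
          exact ih B (by omega) (by omega)
        rw [Finset.fold_congr hcongr]
        apply le_antisymm
        · rw [Finset.fold_max_le]
          refine ⟨foldnn _ _, fun B hB => ?_⟩
          simp only [Finset.mem_filter, Finset.mem_powerset] at hB
          rw [Finset.fold_max_le]
          refine ⟨foldnn _ _, fun C hC => ?_⟩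
          simp only [Finset.mem_filter, Finset.mem_powerset] at hC
          refine (Finset.le_fold_max _).mpr (Or.inr ⟨C, ?_, le_rfl⟩)
          simp only [Finset.mem_filter, Finset.mem_powerset]
          exact ⟨hC.1.trans hB.1, hC.2⟩
        · rw [Finset.fold_max_le]
          refine ⟨foldnn _ _, fun C hC => ?_⟩
          simp only [Finset.mem_filter, Finset.mem_powerset] at hC
          obtain ⟨B, hCB, hBA, hBcard⟩ :=
            Finset.exists_subsuperset_card_eq hC.1 (by omega : C.card ≤ m) (by omega : m ≤ A.card)
          refine (Finset.le_fold_max _).mpr (Or.inr ⟨B, ?_, ?_⟩)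
          · simp only [Finset.mem_filter, Finset.mem_powerset]
            exact ⟨hBA, by omega⟩
          · refine (Finset.le_fold_max _).mpr (Or.inr ⟨C, ?_, le_rfl⟩)
            simp only [Finset.mem_filter, Finset.mem_powerset]
            exact ⟨hCB, hC.2⟩
  -- monotonicity
  have mono : ∀ A B : Finset ι, A ⊆ B → μ A ≤ μ B := by
    intro A B hAB
    by_cases hB : B.card ≤ k
    · have hA : A.card ≤ k := le_trans (Finset.card_le_card hAB) hB
      rw [hμa A hA, hμa B hB]
      have := hνmono A B hAB
      gcongr
    · push_neg at hB
      have hBk : k ≤ B.card := by omega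
      rw [key B.card B rfl hBk]
      by_cases hA : A.card ≤ k
      · obtain ⟨C, hAC, hCB, hCcard⟩ :=
          Finset.exists_subsuperset_card_eq hAB hA hBk
        have h1 : μ A ≤ μ C := by
          rw [hμa A hA, hμa C hCcard.le]
          have := hνmono A C hAC
          gcongr
        refine h1.trans ((Finset.le_fold_max _).mpr (Or.inr ⟨C, ?_, le_rfl⟩))
        simp only [Finset.mem_filter, Finset.mem_powerset]
        exact ⟨hCB, hCcard⟩
      · push_neg at hA
        rw [key A.card A rfl (by omega)]
        rw [Finset.fold_max_le]
        refine ⟨foldnn _ _, fun C hC => ?_⟩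
        simp only [Finset.mem_filter, Finset.mem_powerset] at hC
        refine (Finset.le_fold_max _).mpr (Or.inr ⟨C, ?_, le_rfl⟩)
        simp only [Finset.mem_filter, Finset.mem_powerset]
        exact ⟨hC.1.trans hAB, hC.2⟩
  -- μ ∅ = 0
  have hempty : μ ∅ = 0 := by
    rw [hμa ∅ (by simp), hν0, zero_div]
  -- μ univ = 1
  have huniv : μ (Finset.univ : Finset ι) = 1 := by
    have hcard : k ≤ (Finset.univ : Finset ι).card := by
      rw [Finset.card_univ]; omega
    rw [key _ _ rfl hcard]
    have hpow : (Finset.univ : Finset ι).powerset.filter (fun B => B.card = k)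
        = (Finset.univ : Finset (Finset ι)).filter (fun B => B.card = k) := by
      rw [Finset.powerset_univ]
    rw [hpow]
    set s := (Finset.univ : Finset (Finset ι)).filter (fun B => B.card = k) with hs
    have hsk : ∀ C ∈ s, C.card = k := by
      intro C hC; simp only [hs, Finset.mem_filter] at hC; exact hC.2
    have hle : ∀ C ∈ s, ν C ≤ M := by
      intro C hC
      rw [hM]
      exact (Finset.le_fold_max _).mpr (Or.inr ⟨C, hC, le_rfl⟩)
    have hne : s.Nonempty := by
      obtain ⟨B, hB, hBcard⟩ := Finset.exists_subset_card_eq (le_of_lt (by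
        rw [Finset.card_univ]; exact hk2) : k ≤ (Finset.univ : Finset ι).card)
      exact ⟨B, by simp [hs, hBcard]⟩
    apply le_antisymm
    · rw [Finset.fold_max_le]
      refine ⟨zero_le_one, fun C hC => ?_⟩
      rw [hμa C (hsk C hC).le]
      exact (div_le_one hMpos).mpr (hle C hC)
    · obtain ⟨b, hb, hbmax⟩ := Finset.exists_max_image s ν hne
      have hMle : M ≤ ν b := by
        rw [hM]
        rw [Finset.fold_max_le]
        exact ⟨(hνrange b).1, hbmax⟩
      refine (Finset.le_fold_max _).mpr (Or.inr ⟨b, hb, ?_⟩)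
      rw [hμa b (hsk b hb).le]
      exact (one_le_div hMpos).mpr hMle
  refine ⟨mono, hempty, huniv, fun A => ⟨?_, ?_⟩, fun A hA => key A.card A rfl (by omega)⟩
  · rw [← hempty]; exact mono ∅ A (Finset.empty_subset A)
  · rw [← huniv]; exact mono A Finset.univ (Finset.subset_univ A)
end
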